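/- Fast smoothness bounds are honest: if f is twice differentiable with ‖f''‖_∞ ≤ K and f ∈ A_n (with A_n containing all symmetric blocks of consecutive design points), then for every design point t_i, f(t_i) ≥ max_k [ (1/(2k+1))Σ_{j=−k}^{k} y(t_{i+j}) − (k/n)²K − σ√(3 log n/(2k+1)) ] and f(t_i) ≤ min_k [ (1/(2k+1))Σ_{j=−k}^{k} y(t_{i+j}) + (k/n)²K + σ√(3 log n/(2k+1)) ], where k ranges over 0 ≤ k ≤ min(i−1, n−i). -/

import Mathlib

set_option maxHeartbeats 1000000

lemma lipDeriv (f : ℝ → ℝ) (K : ℝ) (hK : 0 ≤ K)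
    (hf2 : Differentiable ℝ (deriv f)) (hbound : ∀ t : ℝ, |deriv (deriv f) t| ≤ K)
    (x y : ℝ) : |deriv f x - deriv f y| ≤ K * |x - y| := by
  have hC : ∀ z : ℝ, ‖deriv (deriv f) z‖₊ ≤ K.toNNReal := by
    intro z
    rw [← NNReal.coe_le_coe, coe_nnnorm, Real.coe_toNNReal K hK, Real.norm_eq_abs]
    exact hbound z
  have hlip := lipschitzWith_of_nnnorm_deriv_le hf2 hC
  have := hlip.dist_le_mul x y
  rwa [Real.dist_eq, Real.dist_eq, Real.coe_toNNReal K hK] at this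

lemma pairBound (f : ℝ → ℝ) (K : ℝ) (hK : 0 ≤ K)
    (hf1 : Differentiable ℝ f) (hf2 : Differentiable ℝ (deriv f))
    (hbound : ∀ t : ℝ, |deriv (deriv f) t| ≤ K)
    (a h : ℝ) (hh : 0 ≤ h) :
    |f (a + h) + f (a - h) - 2 * f a| ≤ 2 * K * h ^ 2 := by
  set φ : ℝ → ℝ := fun t => f (a + t) + f (a - t) - 2 * f a with hφ
  have hder : ∀ t : ℝ, HasDerivAt φ (deriv f (a + t) - deriv f (a - t)) t := by
    intro t
    have h1 : HasDerivAt (fun t : ℝ => f (a + t)) (deriv f (a + t)) t := by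
      have := ((hf1 (a + t)).hasDerivAt).comp t ((hasDerivAt_id t).const_add a)
      simpa [Function.comp_def] using this
    have h2 : HasDerivAt (fun t : ℝ => f (a - t)) (-deriv f (a - t)) t := by
      have := ((hf1 (a - t)).hasDerivAt).comp t ((hasDerivAt_id t).const_sub a)
      simpa [Function.comp_def] using this
    have := (h1.add h2).sub_const (2 * f a)
    simpa [sub_eq_add_neg, hφ] using this
  have key := Convex.norm_image_sub_le_of_norm_hasDerivWithin_le
    (f := φ) (f' := fun t => deriv f (a + t) - deriv f (a - t)) (C := 2 * K * h)
    (s := Set.Icc 0 h)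
    (fun x _ => (hder x).hasDerivWithinAt)
    (fun x hx => by
      have hx0 : 0 ≤ x := hx.1
      have hxh : x ≤ h := hx.2
      have hl := lipDeriv f K hK hf2 hbound (a + x) (a - x)
      have h2x : |(a + x) - (a - x)| = 2 * x := by
        rw [abs_of_nonneg (by linarith)]; ring
      rw [Real.norm_eq_abs]
      rw [h2x] at hl
      nlinarith)
    (convex_Icc 0 h) (Set.left_mem_Icc.2 hh) (Set.right_mem_Icc.2 hh)
  have hφ0 : φ 0 = 0 := by simp [hφ]; ring
  rw [hφ0, sub_zero, Real.norm_eq_abs, Real.norm_eq_abs, sub_zero,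
    abs_of_nonneg hh] at key
  calc |φ h| ≤ 2 * K * h * h := key
    _ = 2 * K * h ^ 2 := by ring

theorem stmt14 (n i : ℕ) (hn : 2 ≤ n) (hi1 : 1 ≤ i) (hi2 : i ≤ n)
    (σ K : ℝ) (hσ : 0 < σ) (hK : 0 ≤ K) (y : ℕ → ℝ) (f : ℝ → ℝ)
    (hf1 : Differentiable ℝ f) (hf2 : Differentiable ℝ (deriv f))
    (hbound : ∀ t : ℝ, |deriv (deriv f) t| ≤ K)
    (hA : ∀ k : ℕ, k ≤ i - 1 → k ≤ n - i →
      |∑ j ∈ Finset.range (2 * k + 1), (y (i - k + j) - f (((i : ℝ) - k + j) / n))| ≤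
        σ * Real.sqrt (3 * Real.log n) * Real.sqrt (2 * (k : ℝ) + 1)) :
    ∀ k : ℕ, k ≤ i - 1 → k ≤ n - i →
      f ((i : ℝ) / n) ≥
        (∑ j ∈ Finset.range (2 * k + 1), y (i - k + j)) / (2 * (k : ℝ) + 1) -
          ((k : ℝ) / n) ^ 2 * K - σ * Real.sqrt (3 * Real.log n / (2 * (k : ℝ) + 1)) ∧
      f ((i : ℝ) / n) ≤
        (∑ j ∈ Finset.range (2 * k + 1), y (i - k + j)) / (2 * (k : ℝ) + 1) +
          ((k : ℝ) / n) ^ 2 * K + σ * Real.sqrt (3 * Real.log n / (2 * (k : ℝ) + 1)) := by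
  intro k hk1 hk2
  have hn0 : (0:ℝ) < n := by
    have : (0:ℕ) < n := by omega
    exact_mod_cast this
  set a : ℝ := (i : ℝ) / n with ha
  set c : ℝ := 2 * (k : ℝ) + 1 with hc
  have hc0 : (0:ℝ) < c := by positivity
  set Sf : ℝ := ∑ j ∈ Finset.range (2 * k + 1), f (((i : ℝ) - k + j) / n) with hSf
  set Sy : ℝ := ∑ j ∈ Finset.range (2 * k + 1), y (i - k + j) with hSy
  set g : ℕ → ℝ := fun j => f a - f (((i : ℝ) - k + j) / n) with hg
  -- Taylor step
  have hrefl : ∑ j ∈ Finset.range (2 * k + 1), g (2 * k - j)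
      = ∑ j ∈ Finset.range (2 * k + 1), g j := by
    have := Finset.sum_range_reflect g (2 * k + 1)
    simpa using this
  have h2S : 2 * (∑ j ∈ Finset.range (2 * k + 1), g j)
      = ∑ j ∈ Finset.range (2 * k + 1), (g j + g (2 * k - j)) := by
    rw [Finset.sum_add_distrib, hrefl]; ring
  have hterm : ∀ j ∈ Finset.range (2 * k + 1),
      |g j + g (2 * k - j)| ≤ 2 * K * ((k : ℝ) / n) ^ 2 := by
    intro j hj
    have hj' : j ≤ 2 * k := Nat.lt_succ_iff.mp (Finset.mem_range.mp hj)
    have hcast : ((2 * k - j : ℕ) : ℝ) = 2 * (k : ℝ) - j := by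
      push_cast [Nat.cast_sub hj']; ring
    set x : ℝ := ((j : ℝ) - k) / n with hx
    have e1 : ((i : ℝ) - k + j) / n = a + x := by
      rw [ha, hx]; field_simp; ring
    have e2 : ((i : ℝ) - k + (2 * k - j : ℕ)) / n = a - x := by
      rw [hcast, ha, hx]; field_simp; ring
    have hxk : x ^ 2 ≤ ((k : ℝ) / n) ^ 2 := by
      have h1 : (0:ℝ) ≤ (j : ℝ) := Nat.cast_nonneg j
      have h2 : (j : ℝ) ≤ 2 * k := by exact_mod_cast hj'
      have hsq : ((j : ℝ) - k) ^ 2 ≤ (k : ℝ) ^ 2 := by nlinarith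
      rw [hx, div_pow, div_pow]
      exact (div_le_div_iff_of_pos_right (by positivity)).mpr hsq
    have hgexp : g j + g (2 * k - j) = -(f (a + x) + f (a - x) - 2 * f a) := by
      rw [hg]; simp only []
      rw [e1, e2]; ring
    rw [hgexp, abs_neg]
    rcases le_or_gt 0 x with hx0 | hx0
    · have := pairBound f K hK hf1 hf2 hbound a x hx0
      nlinarith
    · have := pairBound f K hK hf1 hf2 hbound a (-x) (by linarith)
      have heq : f (a + -x) + f (a - -x) - 2 * f a = f (a + x) + f (a - x) - 2 * f a := by
        ring_nf
      rw [heq] at this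
      nlinarith
  have hSum2 : |2 * (∑ j ∈ Finset.range (2 * k + 1), g j)|
      ≤ c * (2 * K * ((k : ℝ) / n) ^ 2) := by
    rw [h2S]
    calc |∑ j ∈ Finset.range (2 * k + 1), (g j + g (2 * k - j))|
        ≤ ∑ j ∈ Finset.range (2 * k + 1), |g j + g (2 * k - j)| :=
          Finset.abs_sum_le_sum_abs _ _
      _ ≤ ∑ _j ∈ Finset.range (2 * k + 1), 2 * K * ((k : ℝ) / n) ^ 2 :=
          Finset.sum_le_sum hterm
      _ = c * (2 * K * ((k : ℝ) / n) ^ 2) := by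
          rw [Finset.sum_const, Finset.card_range, nsmul_eq_mul, hc]; push_cast; ring
  have hgsum : ∑ j ∈ Finset.range (2 * k + 1), g j = c * f a - Sf := by
    rw [hg, hSf, Finset.sum_sub_distrib, Finset.sum_const, Finset.card_range,
      nsmul_eq_mul, hc]
    push_cast; ring
  have hT : |f a - Sf / c| ≤ ((k : ℝ) / n) ^ 2 * K := by
    have habs : |c * f a - Sf| ≤ c * (((k : ℝ) / n) ^ 2 * K) := by
      rw [← hgsum]
      rw [abs_mul, abs_two] at hSum2
      linarith
    have heq : f a - Sf / c = (c * f a - Sf) / c := by field_simp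
    rw [heq, abs_div, abs_of_pos hc0]
    rw [div_le_iff₀ hc0]
    linarith
  -- A_n step
  have hAk := hA k hk1 hk2
  have hAsum : ∑ j ∈ Finset.range (2 * k + 1),
      (y (i - k + j) - f (((i : ℝ) - k + j) / n)) = Sy - Sf := by
    rw [Finset.sum_sub_distrib, hSy, hSf]
  rw [hAsum] at hAk
  have hL : (0:ℝ) ≤ 3 * Real.log n := by
    have : (0:ℝ) ≤ Real.log n := Real.log_nonneg (by exact_mod_cast Nat.one_le_of_lt hn)
    linarith
  have hsqc : (0:ℝ) < Real.sqrt c := Real.sqrt_pos.mpr hc0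
  have hcc : Real.sqrt c * Real.sqrt c = c := Real.mul_self_sqrt hc0.le
  have hAavg : |Sy / c - Sf / c| ≤ σ * Real.sqrt (3 * Real.log n / c) := by
    have heq : Sy / c - Sf / c = (Sy - Sf) / c := by ring
    rw [heq, abs_div, abs_of_pos hc0, div_le_iff₀ hc0]
    rw [Real.sqrt_div hL]
    calc |Sy - Sf| ≤ σ * Real.sqrt (3 * Real.log n) * Real.sqrt c := hAk
      _ = σ * (Real.sqrt (3 * Real.log n) / Real.sqrt c) * c := by
          rw [eq_comm]
          have hd : c / Real.sqrt c = Real.sqrt c := Real.div_sqrt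
          calc σ * (Real.sqrt (3 * Real.log n) / Real.sqrt c) * c
              = σ * Real.sqrt (3 * Real.log n) * (c / Real.sqrt c) := by ring
            _ = σ * Real.sqrt (3 * Real.log n) * Real.sqrt c := by rw [hd]
  have h1 := abs_le.mp hT
  have h2 := abs_le.mp hAavg
  constructor
  · rw [ge_iff_le]; linarith [h1.1, h1.2, h2.1, h2.2]
  · linarith [h1.1, h1.2, h2.1, h2.2]
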